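/- Let (A, μ, Δ, α, c) be a Hom-bialgebra with weak unit c over a field of characteristic 0, and let R = Σ sᵢ ⊗ tᵢ ∈ A ⊗ A. Define λ₁ : A* → A by λ₁(φ) = Σ φ(sᵢ) α(tᵢ) and λ₁' : A* → A by λ₁'(φ) = Σ φ(α(sᵢ)) tᵢ. Then the axiom (Δ ⊗ α)(R) = R₁₃R₂₃ holds if and only if λ₁ ∘ Δ* = μ ∘ (λ₁' ⊗ λ₁') : A* ⊗ A* → A, where Δ* is the convolution product on A* dual to Δ. -/

import Mathlib

open TensorProduct

variable {k : Type*} [Field k] [CharZero k] {A : Type*} [AddCommGroup A] [Module k A]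

noncomputable def mulT2 (μ : A →ₗ[k] A →ₗ[k] A) (X Y : A ⊗[k] A) : A ⊗[k] A :=
  ((TensorProduct.map (TensorProduct.lift μ) (TensorProduct.lift μ)) ∘ₗ
    (TensorProduct.tensorTensorTensorComm k A A A A).toLinearMap) (X ⊗ₜ[k] Y)

noncomputable def mulT3 (μ : A →ₗ[k] A →ₗ[k] A) (X Y : (A ⊗[k] A) ⊗[k] A) :
    (A ⊗[k] A) ⊗[k] A :=
  ((TensorProduct.map
      ((TensorProduct.map (TensorProduct.lift μ) (TensorProduct.lift μ)) ∘ₗ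
        (TensorProduct.tensorTensorTensorComm k A A A A).toLinearMap)
      (TensorProduct.lift μ)) ∘ₗ
    (TensorProduct.tensorTensorTensorComm k (A ⊗[k] A) A (A ⊗[k] A) A).toLinearMap)
    (X ⊗ₜ[k] Y)

noncomputable def R12e (c : A) (R : A ⊗[k] A) : (A ⊗[k] A) ⊗[k] A := R ⊗ₜ[k] c

noncomputable def R23e (c : A) (R : A ⊗[k] A) : (A ⊗[k] A) ⊗[k] A :=
  (TensorProduct.assoc k A A A).symm (c ⊗ₜ[k] R)

noncomputable def R13e (c : A) (R : A ⊗[k] A) : (A ⊗[k] A) ⊗[k] A :=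
  TensorProduct.map (TensorProduct.comm k A A).toLinearMap LinearMap.id (R23e c R)

/-- The dual multiplication `Δ*` on `A*`: `⟨Δ*(φ, ψ), x⟩ = ⟨φ ⊗ ψ, Δ(x)⟩`. -/
noncomputable def dualMul (Δ : A →ₗ[k] A ⊗[k] A) (φ ψ : Module.Dual k A) :
    Module.Dual k A :=
  LinearMap.mul' k k ∘ₗ TensorProduct.map φ ψ ∘ₗ Δ

/-- `λ₁(φ) = Σ φ(sᵢ) α(tᵢ)` for `R = Σ sᵢ ⊗ tᵢ`. -/
noncomputable def lam1 (α : A →ₗ[k] A) (R : A ⊗[k] A) (φ : Module.Dual k A) : A :=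
  (TensorProduct.lid k A) (TensorProduct.map φ α R)

/-- `λ₁'(φ) = Σ φ(α(sᵢ)) tᵢ` for `R = Σ sᵢ ⊗ tᵢ`. -/
noncomputable def lam1' (α : A →ₗ[k] A) (R : A ⊗[k] A) (φ : Module.Dual k A) : A :=
  (TensorProduct.lid k A) (TensorProduct.map (φ ∘ₗ α) LinearMap.id R)

noncomputable def evE (φ ψ : Module.Dual k A) : (A ⊗[k] A) ⊗[k] A →ₗ[k] A :=
  (TensorProduct.lid k A).toLinearMap ∘ₗ
    TensorProduct.map (LinearMap.mul' k k ∘ₗ TensorProduct.map φ ψ) LinearMap.id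

lemma evE_tmul (φ ψ : Module.Dual k A) (x y z : A) :
    evE φ ψ ((x ⊗ₜ[k] y) ⊗ₜ[k] z) = (φ x * ψ y) • z := by
  simp [evE]

lemma evE_separates (X : (A ⊗[k] A) ⊗[k] A)
    (h : ∀ φ ψ : Module.Dual k A, evE φ ψ X = 0) : X = 0 := by
  classical
  set b := Module.Basis.ofVectorSpace k A with hb
  set B := (b.tensorProduct b).tensorProduct b with hB
  apply B.repr.injective
  ext ⟨⟨i, j⟩, l⟩
  have key :
      (Finsupp.lapply ((i, j), l) ∘ₗ B.repr.toLinearMap :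
          ((A ⊗[k] A) ⊗[k] A) →ₗ[k] k)
        = (Finsupp.lapply l ∘ₗ b.repr.toLinearMap) ∘ₗ evE (b.coord i) (b.coord j) := by
    apply B.ext
    rintro ⟨⟨p, q⟩, m⟩
    simp only [hB, LinearMap.comp_apply, LinearEquiv.coe_toLinearMap, Module.Basis.repr_self,
      Finsupp.lapply_apply, Module.Basis.tensorProduct_apply, evE_tmul, Module.Basis.coord_apply,
      map_smul, Finsupp.smul_apply, smul_eq_mul, Module.Basis.repr_self]
    by_cases hp : p = i <;> by_cases hq : q = j <;> by_cases hm : m = l <;>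
      simp [hp, hq, hm, Finsupp.single_apply, Prod.ext_iff]
  have hX := LinearMap.congr_fun key X
  simp only [LinearMap.comp_apply, LinearEquiv.coe_toLinearMap, Finsupp.lapply_apply] at hX
  rw [hX, h]
  simp

lemma mulT3_tmul (μ : A →ₗ[k] A →ₗ[k] A) (a b e x y z : A) :
    mulT3 μ ((a ⊗ₜ[k] b) ⊗ₜ[k] e) ((x ⊗ₜ[k] y) ⊗ₜ[k] z)
      = (μ a x ⊗ₜ[k] μ b y) ⊗ₜ[k] μ e z := by
  simp [mulT3, TensorProduct.tensorTensorTensorComm_tmul]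

lemma mulT3_zero_left (μ : A →ₗ[k] A →ₗ[k] A) (Y : (A ⊗[k] A) ⊗[k] A) :
    mulT3 μ 0 Y = 0 := by simp [mulT3]

lemma mulT3_zero_right (μ : A →ₗ[k] A →ₗ[k] A) (X : (A ⊗[k] A) ⊗[k] A) :
    mulT3 μ X 0 = 0 := by simp [mulT3]

lemma mulT3_add_left (μ : A →ₗ[k] A →ₗ[k] A) (X X' Y : (A ⊗[k] A) ⊗[k] A) :
    mulT3 μ (X + X') Y = mulT3 μ X Y + mulT3 μ X' Y := by
  simp [mulT3, TensorProduct.add_tmul]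

lemma mulT3_add_right (μ : A →ₗ[k] A →ₗ[k] A) (X Y Y' : (A ⊗[k] A) ⊗[k] A) :
    mulT3 μ X (Y + Y') = mulT3 μ X Y + mulT3 μ X Y' := by
  simp [mulT3, TensorProduct.tmul_add]

lemma R23e_tmul (c u v : A) : R23e c (u ⊗ₜ[k] v) = (c ⊗ₜ[k] u) ⊗ₜ[k] v := by
  simp [R23e]

lemma R13e_tmul (c u v : A) : R13e c (u ⊗ₜ[k] v) = (u ⊗ₜ[k] c) ⊗ₜ[k] v := by
  simp [R13e, R23e]

lemma R23e_zero (c : A) : R23e c (0 : A ⊗[k] A) = 0 := by simp [R23e]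
lemma R13e_zero (c : A) : R13e c (0 : A ⊗[k] A) = 0 := by simp [R13e, R23e]
lemma R23e_add (c : A) (R R' : A ⊗[k] A) : R23e c (R + R') = R23e c R + R23e c R' := by
  simp [R23e, TensorProduct.tmul_add]
lemma R13e_add (c : A) (R R' : A ⊗[k] A) : R13e c (R + R') = R13e c R + R13e c R' := by
  simp [R13e, R23e_add]

lemma lam1_zero (α : A →ₗ[k] A) (φ : Module.Dual k A) : lam1 α (0 : A ⊗[k] A) φ = 0 := by
  simp [lam1]
lemma lam1_add (α : A →ₗ[k] A) (R R' : A ⊗[k] A) (φ : Module.Dual k A) :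
    lam1 α (R + R') φ = lam1 α R φ + lam1 α R' φ := by simp [lam1]
lemma lam1_tmul (α : A →ₗ[k] A) (s t : A) (φ : Module.Dual k A) :
    lam1 α (s ⊗ₜ[k] t) φ = φ s • α t := by simp [lam1]
lemma lam1'_zero (α : A →ₗ[k] A) (φ : Module.Dual k A) : lam1' α (0 : A ⊗[k] A) φ = 0 := by
  simp [lam1']
lemma lam1'_add (α : A →ₗ[k] A) (R R' : A ⊗[k] A) (φ : Module.Dual k A) :
    lam1' α (R + R') φ = lam1' α R φ + lam1' α R' φ := by simp [lam1']
lemma lam1'_tmul (α : A →ₗ[k] A) (s t : A) (φ : Module.Dual k A) :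
    lam1' α (s ⊗ₜ[k] t) φ = φ (α s) • t := by simp [lam1']

lemma lam1_dualMul (Δ : A →ₗ[k] A ⊗[k] A) (α : A →ₗ[k] A) (R : A ⊗[k] A)
    (φ ψ : Module.Dual k A) :
    lam1 α R (dualMul Δ φ ψ) = evE φ ψ (TensorProduct.map Δ α R) := by
  induction R using TensorProduct.induction_on with
  | zero => simp [lam1_zero]
  | tmul s t =>
      rw [lam1_tmul, TensorProduct.map_tmul]
      simp only [dualMul, LinearMap.comp_apply]
      induction (Δ s) using TensorProduct.induction_on with
      | zero => simp
      | tmul a b =>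
          rw [TensorProduct.map_tmul, evE_tmul]
          simp
      | add u v hu hv =>
          rw [map_add, map_add, add_smul, TensorProduct.add_tmul, map_add, hu, hv]
  | add u v hu hv => rw [lam1_add, map_add, map_add, hu, hv]

lemma mul_lam1' (μ : A →ₗ[k] A →ₗ[k] A) (α : A →ₗ[k] A) (c : A)
    (hcl : ∀ x : A, μ c x = α x) (hcr : ∀ x : A, μ x c = α x)
    (R1 R2 : A ⊗[k] A) (φ ψ : Module.Dual k A) :
    μ (lam1' α R1 φ) (lam1' α R2 ψ) = evE φ ψ (mulT3 μ (R13e c R1) (R23e c R2)) := by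
  induction R1 using TensorProduct.induction_on with
  | zero => simp [lam1'_zero, R13e_zero, mulT3_zero_left]
  | tmul s t =>
      induction R2 using TensorProduct.induction_on with
      | zero => simp [lam1'_zero, R23e_zero, mulT3_zero_right]
      | tmul u v =>
          rw [lam1'_tmul, lam1'_tmul, R13e_tmul, R23e_tmul, mulT3_tmul, evE_tmul,
            hcl, hcr]
          simp only [map_smul, LinearMap.smul_apply, smul_smul]
          rw [mul_comm]
      | add u v hu hv =>
          rw [lam1'_add, map_add, R23e_add, mulT3_add_right, map_add, hu, hv]
  | add u v hu hv =>
      rw [lam1'_add, map_add, LinearMap.add_apply, R13e_add, mulT3_add_left,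
        map_add, hu, hv]

/-- The axiom `(Δ ⊗ α)(R) = R₁₃R₂₃` holds if and only if
`λ₁ ∘ Δ* = μ ∘ (λ₁' ⊗ λ₁')`. -/
theorem first_axiom_iff_lambda_one
    (μ : A →ₗ[k] A →ₗ[k] A) (Δ : A →ₗ[k] A ⊗[k] A) (α : A →ₗ[k] A) (c : A) (R : A ⊗[k] A)
    (hαμ : ∀ x y : A, α (μ x y) = μ (α x) (α y))
    (hassoc : ∀ x y z : A, μ (μ x y) (α z) = μ (α x) (μ y z))
    (hαΔ : Δ ∘ₗ α = TensorProduct.map α α ∘ₗ Δ)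
    (hcoassoc : (TensorProduct.assoc k A A A).toLinearMap ∘ₗ TensorProduct.map Δ α ∘ₗ Δ
      = TensorProduct.map α Δ ∘ₗ Δ)
    (hcompat : ∀ x y : A, Δ (μ x y) = mulT2 μ (Δ x) (Δ y))
    (hcl : ∀ x : A, μ c x = α x) (hcr : ∀ x : A, μ x c = α x) :
    (TensorProduct.map Δ α R = mulT3 μ (R13e c R) (R23e c R)) ↔
    (∀ φ ψ : Module.Dual k A,
      lam1 α R (dualMul Δ φ ψ) = μ (lam1' α R φ) (lam1' α R ψ)) := by
  constructor
  · intro h φ ψ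
    rw [lam1_dualMul, mul_lam1' μ α c hcl hcr, h]
  · intro h
    have hz : ∀ φ ψ : Module.Dual k A,
        evE φ ψ (TensorProduct.map Δ α R - mulT3 μ (R13e c R) (R23e c R)) = 0 := by
      intro φ ψ
      rw [map_sub, ← lam1_dualMul, ← mul_lam1' μ α c hcl hcr, h, sub_self]
    exact sub_eq_zero.mp (evE_separates _ hz)
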